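/- For integers n ≥ 1, a ≥ 0, b with n + b + 1 ≥ 0, define F_n(t) = E_n(t)/(t-1)^{2n} where E_n(x) = Σ_k ⟨⟨n,k⟩⟩ x^k is the generating polynomial of second-order Eulerian numbers. Then ∫_{-∞}^0 t^a (1-t)^{-a-b-2} F_n(t) dt = (-1)^a/(2n+a+b+1) · Σ_{k=0}^{n-1} (-1)^k ⟨⟨n,k⟩⟩ / C(2n+a+b, k+a). -/

import Mathlib

open MeasureTheory

/-- Second-order Eulerian numbers. -/
def eulerian2 : ℕ → ℤ → ℝ
  | 0, k => if k = 0 then 1 else 0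
  | n+1, k => ((k : ℝ) + 1) * eulerian2 n k + (2 * (n : ℝ) + 1 - (k : ℝ)) * eulerian2 n (k - 1)

/-- The second-order Eulerian polynomial E_n(t) = Σ_k ⟨⟨n,k⟩⟩ t^k. -/
def E2poly (n : ℕ) (t : ℝ) : ℝ := ∑ k ∈ Finset.range (n + 1), eulerian2 n k * t ^ k

/-- F_n(t) = E_n(t)/(t-1)^{2n}. -/
noncomputable def Ffun (n : ℕ) (t : ℝ) : ℝ := E2poly n t / (t - 1) ^ (2 * n)

open Set Finset Filter


lemma T_val : ∀ (m c : ℕ), ∑ j ∈ Finset.range (m+1), (-1:ℝ)^j * (m.choose j) / ((c:ℝ)+1+j)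
    = (m.factorial : ℝ) * c.factorial / (m+c+1).factorial := by
  intro m
  induction m with
  | zero =>
    intro c
    have h5 : ((c:ℝ)+1) ≠ 0 := by positivity
    have hc : (c.factorial : ℝ) ≠ 0 := by positivity
    rw [Finset.sum_range_one, show (0+c+1 : ℕ) = c+1 from by ring, Nat.factorial_succ]
    push_cast
    field_simp
    simp
  | succ m ih =>
    intro c
    have e0 : ∀ c' : ℕ, ∑ j ∈ Finset.range m, (-1:ℝ)^j * (m.choose (j+1)) / ((c':ℝ)+2+j)
        = -(∑ j ∈ Finset.range (m+1), (-1:ℝ)^j * (m.choose j) / ((c':ℝ)+1+j)) + 1/((c':ℝ)+1) := by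
      intro c'
      rw [Finset.sum_range_succ' (fun j => (-1:ℝ)^j * (m.choose j) / ((c':ℝ)+1+j)) m]
      have hh : ∀ j ∈ Finset.range m,
          -((-1:ℝ)^(j+1) * ((m.choose (j+1)):ℝ) / ((c':ℝ)+1+((j+1:ℕ):ℝ)))
          = (-1:ℝ)^j * (m.choose (j+1)) / ((c':ℝ)+2+j) := by
        intro j _; push_cast; rw [pow_succ]; ring
      rw [← Finset.sum_congr rfl hh, Finset.sum_neg_distrib]
      simp only [Nat.choose_zero_right, Nat.cast_one, pow_zero, Nat.cast_zero, one_mul, add_zero]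
      ring
    have key : ∑ j ∈ Finset.range (m+2), (-1:ℝ)^j * ((m+1).choose j) / ((c:ℝ)+1+j)
        = (∑ j ∈ Finset.range (m+1), (-1:ℝ)^j * (m.choose j) / ((c:ℝ)+1+j))
          - ∑ j ∈ Finset.range (m+1), (-1:ℝ)^j * (m.choose j) / (((c:ℝ)+1)+1+j) := by
      rw [Finset.sum_range_succ' (fun j => (-1:ℝ)^j * ((m+1).choose j) / ((c:ℝ)+1+j)) (m+1)]
      have h2 : ∀ j ∈ Finset.range (m+1),
          (-1:ℝ)^(j+1) * (((m+1).choose (j+1)):ℝ) / ((c:ℝ)+1+((j+1:ℕ):ℝ))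
          = -((-1:ℝ)^j * (m.choose j) / (((c:ℝ)+1)+1+j))
            - (-1:ℝ)^j * (m.choose (j+1)) / ((c:ℝ)+2+(j:ℝ)) := by
        intro j _
        rw [Nat.choose_succ_succ, Nat.cast_add, pow_succ]
        push_cast
        ring
      rw [Finset.sum_congr rfl h2, Finset.sum_sub_distrib, Finset.sum_neg_distrib]
      have h3 : ∑ j ∈ Finset.range (m+1), (-1:ℝ)^j * (m.choose (j+1)) / ((c:ℝ)+2+(j:ℝ))
          = ∑ j ∈ Finset.range m, (-1:ℝ)^j * (m.choose (j+1)) / ((c:ℝ)+2+(j:ℝ)) := by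
        rw [Finset.sum_range_succ, Nat.choose_succ_self]
        simp
      rw [h3, e0 c]
      simp only [Nat.choose_zero_right, Nat.cast_one, pow_zero, Nat.cast_zero, one_mul, add_zero]
      ring
    have ihc : ∑ j ∈ Finset.range (m+1), (-1:ℝ)^j * (m.choose j) / (((c:ℝ)+1)+1+j)
        = (m.factorial : ℝ) * (c+1).factorial / (m+(c+1)+1).factorial := by
      have h := ih (c+1)
      push_cast at h
      exact h
    rw [key, ih c, ihc]
    have e1 : (((m+(c+1)+1).factorial : ℕ) : ℝ) = ((m:ℝ)+c+2) * ((m+c+1).factorial : ℕ) := by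
      rw [show m+(c+1)+1 = (m+c+1)+1 from by ring, Nat.factorial_succ]; push_cast; ring
    have e2 : (((m+1+c+1).factorial : ℕ) : ℝ) = ((m:ℝ)+c+2) * ((m+c+1).factorial : ℕ) := by
      rw [show m+1+c+1 = (m+c+1)+1 from by ring, Nat.factorial_succ]; push_cast; ring
    have f2 : (((c+1).factorial : ℕ) : ℝ) = ((c:ℝ)+1) * (c.factorial : ℕ) := by
      rw [Nat.factorial_succ]; push_cast; ring
    have f3 : (((m+1).factorial : ℕ) : ℝ) = ((m:ℝ)+1) * (m.factorial : ℕ) := by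
      rw [Nat.factorial_succ]; push_cast; ring
    rw [e1, e2, f2, f3]
    have hP : (((m+c+1).factorial : ℕ) : ℝ) ≠ 0 := by positivity
    have h5 : ((m:ℝ)+c+2) ≠ 0 := by positivity
    field_simp
    ring


lemma S_val (m c : ℕ) : ∑ j ∈ Finset.range (m+1), (-1:ℝ)^(m-j) * (m.choose j) / ((m:ℝ)+c+1-j)
    = (m.factorial : ℝ) * c.factorial / (m+c+1).factorial := by
  rw [← T_val m c,
    ← Finset.sum_range_reflect (fun j => (-1:ℝ)^j * (m.choose j) / ((c:ℝ)+1+j)) (m+1)]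
  apply Finset.sum_congr rfl
  intro j hj
  rw [Finset.mem_range, Nat.lt_succ_iff] at hj
  simp only [Nat.add_sub_cancel]
  rw [Nat.choose_symm hj, Nat.cast_sub hj]
  ring

noncomputable def Hfun (m c : ℕ) (s : ℝ) : ℝ :=
  ∑ j ∈ Finset.range (m+1),
    ((-1:ℝ)^(m-j) * (m.choose j) / ((j:ℝ)-m-c-1)) * (1+s)^((j:ℤ)-m-c-1)

lemma Hfun_deriv (m c : ℕ) (s : ℝ) (hs : 0 ≤ s) :
    HasDerivAt (Hfun m c) (s^m * (1+s)^(-(m:ℤ)-c-2)) s := by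
  have h1s : (0:ℝ) < 1 + s := by linarith
  have hne : (1:ℝ) + s ≠ 0 := ne_of_gt h1s
  have hd : HasDerivAt (Hfun m c)
      (∑ j ∈ Finset.range (m+1),
        (-1:ℝ)^(m-j) * (m.choose j) * (1+s)^((j:ℤ)-(m:ℤ)-c-2)) s := by
    unfold Hfun
    apply HasDerivAt.fun_sum
    intro j hj
    rw [Finset.mem_range, Nat.lt_succ_iff] at hj
    have hjm : (j:ℝ) ≤ m := Nat.cast_le.mpr hj
    have he : ((j:ℝ)-m-c-1) ≠ 0 := by
      have : ((c:ℝ)) ≥ 0 := Nat.cast_nonneg c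
      intro h; nlinarith
    have h1 : HasDerivAt (fun s : ℝ => 1 + s) 1 s := by
      simpa using (hasDerivAt_id s).const_add (1:ℝ)
    have h2 : HasDerivAt (fun s : ℝ => (1+s)^((j:ℤ)-m-c-1))
        ((((j:ℤ)-m-c-1 : ℤ):ℝ) * (1+s)^(((j:ℤ)-m-c-1)-1) * 1) s :=
      HasDerivAt.comp s (hasDerivAt_zpow ((j:ℤ)-m-c-1) (1+s) (Or.inl hne)) h1
    have h3 := h2.const_mul ((-1:ℝ)^(m-j) * (m.choose j) / ((j:ℝ)-m-c-1))
    convert h3 using 1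
    · rfl
    rw [show ((j:ℤ)-m-c-1)-1 = (j:ℤ)-(m:ℤ)-c-2 from by ring]
    push_cast
    field_simp
  convert hd using 1
  have hsplit : ∀ j : ℕ, ((1:ℝ)+s)^((j:ℤ)-(m:ℤ)-c-2)
      = (1+s)^(j:ℕ) * (1+s)^(-(m:ℤ)-c-2) := by
    intro j
    rw [show (j:ℤ)-(m:ℤ)-c-2 = (j:ℤ) + (-(m:ℤ)-c-2) from by ring, zpow_add₀ hne, zpow_natCast]
  simp_rw [hsplit]
  have expand : s^m = ∑ j ∈ Finset.range (m+1), (1+s)^j * (-1:ℝ)^(m-j) * (m.choose j) := by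
    have h := add_pow (1+s) (-1:ℝ) m
    rw [show (1+s+(-1):ℝ) = s from by ring] at h
    rw [h]
  rw [expand, Finset.sum_mul]
  apply Finset.sum_congr rfl
  intro j _
  ring

lemma Hfun_tendsto (m c : ℕ) : Tendsto (Hfun m c) atTop (nhds 0) := by
  have : Tendsto (fun s : ℝ => ∑ j ∈ Finset.range (m+1),
      ((-1:ℝ)^(m-j) * (m.choose j) / ((j:ℝ)-m-c-1)) * (1+s)^((j:ℤ)-m-c-1)) atTop
      (nhds (∑ j ∈ Finset.range (m+1), 0)) := by
    apply tendsto_finset_sum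
    intro j hj
    rw [Finset.mem_range, Nat.lt_succ_iff] at hj
    have he : ((j:ℤ)-m-c-1) < 0 := by
      have : (j:ℤ) ≤ m := Int.ofNat_le.mpr hj
      omega
    have h0 : Tendsto (fun s : ℝ => (1+s)^((j:ℤ)-m-c-1)) atTop (nhds 0) :=
      (tendsto_zpow_atTop_zero he).comp (tendsto_atTop_add_const_left _ 1 tendsto_id)
    simpa using h0.const_mul ((-1:ℝ)^(m-j) * (m.choose j) / ((j:ℝ)-m-c-1))
  unfold Hfun
  simpa using this

lemma base_nonneg (m c : ℕ) : ∀ s ∈ Ioi (0:ℝ), 0 ≤ s^m * (1+s)^(-(m:ℤ)-c-2) := by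
  intro s hs
  have h1s : (0:ℝ) < 1 + s := by simp at hs; linarith
  have := zpow_pos h1s (-(m:ℤ)-c-2)
  have hsp : (0:ℝ) ≤ s := by simp at hs; linarith
  positivity

lemma integrable_Ioi (m c : ℕ) :
    IntegrableOn (fun s => s^m * (1+s)^(-(m:ℤ)-c-2)) (Ioi (0:ℝ)) :=
  integrableOn_Ioi_deriv_of_nonneg' (fun s hs => Hfun_deriv m c s hs)
    (base_nonneg m c) (Hfun_tendsto m c)

lemma integral_Ioi_val (m c : ℕ) :
    (∫ s in Ioi (0:ℝ), s^m * (1+s)^(-(m:ℤ)-c-2))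
      = (m.factorial : ℝ) * c.factorial / (m+c+1).factorial := by
  rw [integral_Ioi_of_hasDerivAt_of_nonneg' (fun s hs => Hfun_deriv m c s hs)
    (base_nonneg m c) (Hfun_tendsto m c)]
  rw [zero_sub]
  have h0 : Hfun m c 0 = ∑ j ∈ Finset.range (m+1),
      (-1:ℝ)^(m-j) * (m.choose j) / ((j:ℝ)-m-c-1) := by
    unfold Hfun
    apply Finset.sum_congr rfl
    intro j _
    rw [show (1:ℝ)+0 = 1 from by ring, one_zpow, mul_one]
  rw [h0, ← S_val m c, ← Finset.sum_neg_distrib]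
  apply Finset.sum_congr rfl
  intro j hj
  rw [show (m:ℝ)+c+1-(j:ℝ) = -((j:ℝ)-(m:ℝ)-c-1) from by ring, div_neg]

lemma neg_comp_eq (m c : ℕ) : ∀ x : ℝ,
    (-1:ℝ)^m * ((-x)^m * (1+(-x))^(-(m:ℤ)-c-2)) = x^m * (1-x)^(-(m:ℤ)-c-2) := by
  intro x
  rw [show (1:ℝ)+(-x) = 1-x from by ring]
  have h2 : (-1:ℝ)^m * (-1:ℝ)^m = 1 := by rw [← mul_pow]; norm_num
  calc (-1:ℝ)^m * ((-x)^m * (1-x)^(-(m:ℤ)-c-2))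
      = ((-1:ℝ)^m * (-1:ℝ)^m) * (x^m * (1-x)^(-(m:ℤ)-c-2)) := by
        rw [neg_pow x m]; ring
    _ = x^m * (1-x)^(-(m:ℤ)-c-2) := by rw [h2, one_mul]

lemma integrable_Iic (m c : ℕ) :
    IntegrableOn (fun t : ℝ => t^m * (1-t)^(-(m:ℤ)-c-2)) (Iic (0:ℝ)) := by
  rw [integrableOn_Iic_iff_integrableOn_Iio]
  have h := ((Measure.measurePreserving_neg (volume : Measure ℝ)).integrableOn_comp_preimage
    (Homeomorph.neg ℝ).measurableEmbedding).2 (integrable_Ioi m c)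
  simp only [neg_preimage, neg_Ioi, neg_zero] at h
  have h2 : IntegrableOn
      (fun x : ℝ => (-1:ℝ)^m * ((-x)^m * (1+(-x))^(-(m:ℤ)-c-2))) (Iio (0:ℝ)) :=
    h.const_mul ((-1:ℝ)^m)
  apply h2.congr_fun ?_ measurableSet_Iio
  intro x _
  simpa using neg_comp_eq m c x

lemma integral_Iic_val (m c : ℕ) :
    (∫ t in Iic (0:ℝ), t^m * (1-t)^(-(m:ℤ)-c-2))
      = (-1:ℝ)^m * m.factorial * c.factorial / (m+c+1).factorial := by
  have h := integral_comp_neg_Iic (0:ℝ)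
    (fun s => (-1:ℝ)^m * (s^m * (1+s)^(-(m:ℤ)-c-2)))
  simp only [neg_zero] at h
  have h1 : (∫ x in Iic (0:ℝ), (-1:ℝ)^m * ((-x)^m * (1+(-x))^(-(m:ℤ)-c-2)))
      = ∫ t in Iic (0:ℝ), t^m * (1-t)^(-(m:ℤ)-c-2) := by
    apply integral_congr_ae
    filter_upwards with x
    exact neg_comp_eq m c x
  rw [← h1, h, integral_const_mul, integral_Ioi_val m c]
  ring

lemma e2_zero : ∀ n : ℕ, 1 ≤ n → ∀ k : ℤ, (n:ℤ) ≤ k → eulerian2 n k = 0 := by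
  intro n
  induction n with
  | zero => intro h; exact absurd h (by norm_num)
  | succ n ih =>
    intro _ k hk
    simp only [eulerian2]
    rcases Nat.eq_zero_or_pos n with h0 | h1
    · subst h0
      have e1 : eulerian2 0 k = 0 := by
        simp only [eulerian2, if_neg (show k ≠ 0 by omega)]
      rcases show k = 1 ∨ 2 ≤ k by omega with rfl | h2
      · have e2 : eulerian2 0 (1-1 : ℤ) = 1 := by norm_num [eulerian2]
        rw [e1, e2]
        norm_num
      · have e2 : eulerian2 0 (k-1) = 0 := by
          simp only [eulerian2, if_neg (show k-1 ≠ 0 by omega)]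
        rw [e1, e2]
        ring
    · rw [ih h1 k (by push_cast; omega), ih h1 (k-1) (by push_cast; omega)]
      ring

theorem stmt11 (n : ℕ) (hn : 1 ≤ n) (a : ℕ) (b : ℤ) (hb : 0 ≤ (n : ℤ) + b + 1) :
    ∫ t in Set.Iic (0 : ℝ), (t ^ a * (1 - t) ^ (-(a : ℤ) - b - 2) * Ffun n t)
      = (-1 : ℝ) ^ a / (2 * (n : ℝ) + (a : ℝ) + (b : ℝ) + 1) *
          ∑ k ∈ Finset.range n,
            (-1 : ℝ) ^ k * eulerian2 n k /
              (Nat.choose (2 * (n : ℤ) + a + b).toNat (k + a) : ℝ) := by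
  have hE : ∀ t : ℝ, E2poly n t = ∑ k ∈ Finset.range n, eulerian2 n k * t ^ k := by
    intro t
    rw [E2poly, Finset.sum_range_succ, e2_zero n hn n (le_refl _), zero_mul, add_zero]
  set c : ℕ → ℕ := fun k => (2*(n:ℤ) + b - k).toNat with hc
  have hcval : ∀ k ∈ Finset.range n, ((c k : ℤ)) = 2*(n:ℤ) + b - k := by
    intro k hk
    rw [Finset.mem_range] at hk
    rw [hc]
    have : 0 ≤ 2*(n:ℤ) + b - k := by omega
    exact Int.toNat_of_nonneg this
  have hpt : ∀ t ∈ Iic (0:ℝ), t ^ a * (1 - t) ^ (-(a : ℤ) - b - 2) * Ffun n t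
      = ∑ k ∈ Finset.range n, eulerian2 n k *
          (t^(k+a) * (1-t)^(-((k+a : ℕ):ℤ)-(c k)-2)) := by
    intro t ht
    have ht0 : t ≤ 0 := ht
    have h1t : (0:ℝ) < 1 - t := by linarith
    have hne : (1:ℝ) - t ≠ 0 := ne_of_gt h1t
    rw [Ffun, hE]
    rw [show (t-1:ℝ)^(2*n) = (1-t)^(2*n) from by
      rw [show (t-1:ℝ) = -(1-t) from by ring, Even.neg_pow (even_two_mul n)]]
    rw [Finset.sum_div, Finset.mul_sum]
    apply Finset.sum_congr rfl
    intro k hk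
    have hck := hcval k hk
    have hexp : -((k+a : ℕ):ℤ)-(c k)-2 = (-(a:ℤ)-b-2) - (2*n : ℕ) := by
      push_cast
      omega
    conv_rhs => rw [hexp, zpow_sub₀ hne, zpow_natCast]
    rw [pow_add]
    field_simp
  rw [setIntegral_congr_fun measurableSet_Iic hpt,
    integral_finset_sum _ (fun k _ => ((integrable_Iic (k+a) (c k)).const_mul _)),
    Finset.mul_sum]
  apply Finset.sum_congr rfl
  intro k hk
  have hck := hcval k hk
  rw [integral_const_mul, integral_Iic_val (k+a) (c k)]
  have hT : (2*(n:ℤ)+a+b).toNat = (k+a) + c k := by omega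
  rw [hT]
  have hle : k+a ≤ k+a+c k := Nat.le_add_right _ _
  have hch := Nat.choose_mul_factorial_mul_factorial hle
  rw [Nat.add_sub_cancel_left] at hch
  have hckR : ((c k : ℕ):ℝ) = 2*(n:ℝ)+(b:ℝ)-(k:ℝ) := by
    have := hck
    push_cast at this ⊢
    exact_mod_cast this
  have hD : 2*(n:ℝ)+(a:ℝ)+(b:ℝ)+1 = ((k+a+c k : ℕ):ℝ)+1 := by
    push_cast [hckR]
    ring
  have hchR : (((k+a+c k).choose (k+a) : ℕ):ℝ) * ((k+a).factorial : ℕ) * ((c k).factorial : ℕ)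
      = (((k+a+c k).factorial : ℕ) : ℝ) := by exact_mod_cast hch
  have hfs : (((k+a+c k+1).factorial : ℕ) : ℝ)
      = (((k+a+c k : ℕ):ℝ)+1) * ((k+a+c k).factorial : ℕ) := by
    rw [Nat.factorial_succ]
    push_cast
    ring
  have hne1 : (((k+a+c k).factorial : ℕ):ℝ) ≠ 0 := by positivity
  have hne2 : ((((k+a+c k).choose (k+a)) : ℕ):ℝ) ≠ 0 := by
    have := Nat.choose_pos hle
    positivity
  rw [hD, hfs]
  rw [pow_add (-1:ℝ) k a]
  field_simp
  linear_combination eulerian2 n (k:ℤ) * hchR
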